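/- Let S ⊆ ℝⁿ be a nonempty compact convex set and g : S × S → ℝ such that for every u ∈ S, g(u, ·) is quasiconvex and lower semicontinuous on S. Then {x⁰ ∈ S : g(x⁰, x) ≤ 0 ∀x ∈ S} = {x⁰ ∈ S : g(x⁰, x) ≤ 0 ∀x ∈ exp S}. -/

import Mathlib

open Set

lemma my_pad_sum {ι : Type*} [Fintype ι] {N : ℕ} (emb : ι ↪ Fin N) {M : Type*} [AddCommMonoid M]
    (F : Fin N → M) (G : ι → M) (h1 : ∀ j, F (emb j) = G j)
    (h2 : ∀ i, (¬∃ j, emb j = i) → F i = 0) : ∑ i, F i = ∑ j, G j := by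
  classical
  have hmap : ∑ i ∈ Finset.univ.map emb, F i = ∑ j, G j := by
    rw [Finset.sum_map]; exact Finset.sum_congr rfl fun j _ => h1 j
  rw [← hmap]
  exact (Finset.sum_subset (Finset.subset_univ _) fun i _ hi =>
    h2 i fun ⟨j, hj⟩ => hi (Finset.mem_map.2 ⟨j, Finset.mem_univ j, hj⟩)).symm

theorem my_isCompact_convexHull {E : Type*} [NormedAddCommGroup E] [NormedSpace ℝ E]
    [FiniteDimensional ℝ E] {D : Set E} (hD : IsCompact D) :
    IsCompact (convexHull ℝ D) := by
  rcases D.eq_empty_or_nonempty with rfl | ⟨d₀, hd₀⟩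
  · simp [convexHull_empty]
  set N := Module.finrank ℝ E + 1 with hN
  set f : (Fin N → ℝ) × (Fin N → E) → E := fun p => ∑ i, p.1 i • p.2 i with hfdef
  have hf : Continuous f :=
    continuous_finset_sum _ fun i _ =>
      ((continuous_apply i).comp continuous_fst).smul ((continuous_apply i).comp continuous_snd)
  have hK : IsCompact (stdSimplex ℝ (Fin N) ×ˢ Set.univ.pi fun _ : Fin N => D) :=
    (isCompact_stdSimplex (𝕜 := ℝ) (ι := Fin N)).prod (isCompact_univ_pi fun _ => hD)
  have himg : convexHull ℝ D = f '' (stdSimplex ℝ (Fin N) ×ˢ Set.univ.pi fun _ : Fin N => D) := by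
    apply Subset.antisymm
    · intro x hx
      obtain ⟨ι, hfin, z, w, hrange, hai, hpos, hsum, hrep⟩ :=
        eq_pos_convex_span_of_mem_convexHull hx
      letI : Fintype ι := hfin
      have hne : Nonempty ι := by
        by_contra h
        rw [not_nonempty_iff] at h
        simp [Finset.univ_eq_empty] at hsum
      inhabit ι
      have hcard : Fintype.card ι ≤ N := by
        calc Fintype.card ι ≤ Module.finrank ℝ (vectorSpan ℝ (Set.range z)) + 1 :=
              hai.card_le_finrank_succ
          _ ≤ N := by
              have := Submodule.finrank_le (vectorSpan ℝ (Set.range z))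
              omega
      let emb : ι ↪ Fin N := (Fintype.equivFin ι).toEmbedding.trans (Fin.castLEEmb hcard)
      have hembinj : Function.Injective emb := emb.injective
      set w' : Fin N → ℝ := Function.extend emb w 0 with hw'def
      set v' : Fin N → E := Function.extend emb z (fun _ => z default) with hv'def
      have hwapp : ∀ j, w' (emb j) = w j := fun j => hembinj.extend_apply w 0 j
      have hwapp0 : ∀ i, (¬∃ j, emb j = i) → w' i = 0 := fun i h =>
        Function.extend_apply' w (0 : Fin N → ℝ) i h
      have hvapp : ∀ j, v' (emb j) = z j := fun j => hembinj.extend_apply z _ j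
      have hvapp0 : ∀ i, (¬∃ j, emb j = i) → v' i = z default := fun i h =>
        Function.extend_apply' z _ i h
      refine ⟨(w', v'), ⟨⟨?_, ?_⟩, ?_⟩, ?_⟩
      · intro i
        show 0 ≤ w' i
        rcases em (∃ j, emb j = i) with ⟨j, rfl⟩ | h
        · rw [hwapp]; exact (hpos j).le
        · rw [hwapp0 i h]
      · show ∑ i, w' i = 1
        rw [my_pad_sum emb w' w hwapp hwapp0, hsum]
      · intro i _
        show v' i ∈ D
        rcases em (∃ j, emb j = i) with ⟨j, rfl⟩ | h
        · rw [hvapp]; exact hrange ⟨j, rfl⟩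
        · rw [hvapp0 i h]; exact hrange ⟨default, rfl⟩
      · show ∑ i, w' i • v' i = x
        rw [my_pad_sum emb (fun i => w' i • v' i) (fun j => w j • z j)
          (fun j => by show w' (emb j) • v' (emb j) = w j • z j; rw [hwapp, hvapp])
          (fun i h => by show w' i • v' i = 0; rw [hwapp0 i h, zero_smul]), hrep]
    · rintro x ⟨⟨w, v⟩, ⟨⟨hw0, hw1⟩, hv⟩, rfl⟩
      exact (convex_convexHull ℝ D).sum_mem (fun i _ => hw0 i) hw1
        fun i _ => subset_convexHull ℝ D (hv i (mem_univ i))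
  rw [himg]
  exact hK.image hf

/-- The farthest point of a nonempty compact set from any point `z` is an exposed point. -/
lemma my_farthest_exposed {E : Type*} [NormedAddCommGroup E] [InnerProductSpace ℝ E]
    {S : Set E} (hS : S.Nonempty) (hcomp : IsCompact S) (z : E) :
    ∃ p ∈ S, (∀ y ∈ S, dist y z ≤ dist p z) ∧
      ∀ y ∈ S, y ≠ p → (inner ℝ (z - p) p : ℝ) < inner ℝ (z - p) y := by
  obtain ⟨p, hp, hmax⟩ := hcomp.exists_isMaxOn hS
    ((continuous_id.dist continuous_const).continuousOn)
  refine ⟨p, hp, fun y hy => hmax hy, ?_⟩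
  intro y hy hne
  by_contra hcon
  push_neg at hcon
  apply hne
  have h1 : dist y z ≤ dist p z := hmax hy
  have h2 : ‖y - z‖ ≤ ‖p - z‖ := by rwa [dist_eq_norm, dist_eq_norm] at h1
  have e1 : ‖y - z‖^2 = ‖y - p‖^2 + 2 * (inner ℝ (y - p) (p - z) : ℝ) + ‖p - z‖^2 := by
    have := norm_add_sq_real (y - p) (p - z)
    rwa [show (y - p) + (p - z) = y - z by abel] at this
  have key : 0 ≤ (inner ℝ (y - p) (p - z) : ℝ) := by
    have hc : (inner ℝ (z - p) y : ℝ) ≤ inner ℝ (z - p) p := hcon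
    have expand : (inner ℝ (y - p) (p - z) : ℝ) = (inner ℝ (z - p) p : ℝ) - inner ℝ (z - p) y := by
      rw [real_inner_comm]
      simp only [inner_sub_left, inner_sub_right]
      ring
    linarith
  have hnorm : ‖y - p‖^2 ≤ 0 := by nlinarith [norm_nonneg (y - z), norm_nonneg (p - z)]
  have : ‖y - p‖ = 0 := by nlinarith [norm_nonneg (y - p)]
  rwa [norm_sub_eq_zero_iff] at this


/-- Straszewicz-type consequence: a closed convex set containing all exposed points of a
compact convex set `S` contains `S`. -/
lemma my_straszewicz {E : Type*} [NormedAddCommGroup E] [InnerProductSpace ℝ E]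
    [FiniteDimensional ℝ E] {S T : Set E} (hS : S.Nonempty) (hcomp : IsCompact S)
    (hconv : Convex ℝ S) (hTconv : Convex ℝ T) (hTclosed : IsClosed T)
    (hExpT : ∀ p ∈ S, (∃ c : E, ∀ y ∈ S, y ≠ p → (inner ℝ c p : ℝ) < inner ℝ c y) → p ∈ T) :
    S ⊆ T := by
  have hstras : S.extremePoints ℝ ⊆ closure {p ∈ S | ∃ c : E,
      ∀ y ∈ S, y ≠ p → (inner ℝ c p : ℝ) < inner ℝ c y} := by
    intro e he
    rw [Metric.mem_closure_iff]
    intro ε hε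
    set D : Set E := S \ Metric.ball e ε with hD
    have hDcomp : IsCompact D :=
      hcomp.of_isClosed_subset (hcomp.isClosed.inter Metric.isOpen_ball.isClosed_compl)
        diff_subset
    rcases D.eq_empty_or_nonempty with hDe | hDne
    · -- S ⊆ ball e ε : any exposed point works
      obtain ⟨p, hpS, _, hpexp⟩ := my_farthest_exposed hS hcomp e
      refine ⟨p, ⟨hpS, e - p, hpexp⟩, ?_⟩
      have hms : p ∈ Metric.ball e ε := by
        by_contra h
        have hpD : p ∈ D := ⟨hpS, h⟩
        rw [hDe] at hpD
        exact absurd hpD (Set.notMem_empty p)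
      simpa [dist_comm] using hms
    · set C : Set E := convexHull ℝ D with hC
      have hCcomp : IsCompact C := my_isCompact_convexHull hDcomp
      have hCconv : Convex ℝ C := convex_convexHull ℝ D
      have heC : e ∉ C := by
        intro hmem
        have h1 := (hconv.mem_extremePoints_iff_mem_diff_convexHull_diff.1 he).2
        have hsub : D ⊆ S \ {e} := by
          intro x hxD
          refine ⟨hxD.1, ?_⟩
          intro hxe
          apply hxD.2
          rw [Set.mem_singleton_iff] at hxe
          rw [hxe]
          exact Metric.mem_ball_self hε
        exact h1 (convexHull_mono hsub hmem)
      obtain ⟨f, u, hfe, hfC⟩ :=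
        geometric_hahn_banach_point_closed hCconv hCcomp.isClosed heC
      set c : E := (InnerProductSpace.toDual ℝ E).symm f with hc
      have hcf : ∀ x : E, (inner ℝ c x : ℝ) = f x := fun x =>
        InnerProductSpace.toDual_symm_apply
      set δ : ℝ := u - f e with hδ
      have hδpos : 0 < δ := by simp [hδ]; linarith
      obtain ⟨B, hB⟩ : ∃ B, ∀ x ∈ C, ‖x - e‖ ≤ B :=
        hCcomp.exists_bound_of_continuousOn (continuous_id.sub continuous_const).continuousOn
      set R : ℝ := B^2 / (2*δ) + 1 with hR
      have hRpos : 0 < R := by positivity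
      have hR2 : B^2 < 2 * R * δ := by
        have h1 : B^2 / (2*δ) < R := by simp [hR]
        calc B^2 = (B^2/(2*δ)) * (2*δ) := by field_simp
          _ < R * (2*δ) := by
              apply mul_lt_mul_of_pos_right h1
              linarith
          _ = 2 * R * δ := by ring
      set z : E := e + R • c with hz
      obtain ⟨p, hpS, hpmax, hpexp⟩ := my_farthest_exposed hS hcomp z
      have hpD : p ∉ D := by
        intro hpD
        have hpC : p ∈ C := subset_convexHull ℝ D hpD
        have h1 : dist e z ≤ dist p z := hpmax e (extremePoints_subset he)
        have h2 : dist e z = R * ‖c‖ := by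
          rw [dist_eq_norm, hz]
          simp [norm_smul, abs_of_pos hRpos]
        have h3 : (dist p z)^2 = ‖p - e‖^2 - 2*R*(inner ℝ c (p - e) : ℝ) + R^2*‖c‖^2 := by
          rw [dist_eq_norm]
          have hpz : p - z = (p - e) + (-(R • c)) := by rw [hz]; abel
          rw [hpz, norm_add_sq_real]
          rw [inner_neg_right, real_inner_smul_right, norm_neg, norm_smul]
          rw [real_inner_comm]
          rw [Real.norm_eq_abs, abs_of_pos hRpos]
          ring
        have h4 : δ < (inner ℝ c (p - e) : ℝ) := by
          rw [inner_sub_right, hcf, hcf]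
          have := hfC p hpC
          simp [hδ]
          linarith
        have h5 : ‖p - e‖ ≤ B := hB p hpC
        have h6 : (dist p z)^2 < (dist e z)^2 := by
          rw [h2, mul_pow]
          calc (dist p z)^2 = ‖p - e‖^2 - 2*R*(inner ℝ c (p - e) : ℝ) + R^2*‖c‖^2 := h3
            _ < B^2 - 2*R*δ + R^2*‖c‖^2 := by
                have hh : 2*R*δ < 2*R*(inner ℝ c (p-e) : ℝ) :=
                  mul_lt_mul_of_pos_left h4 (by linarith)
                have hh2 : ‖p - e‖^2 ≤ B^2 := by
                  have := norm_nonneg (p - e)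
                  nlinarith
                linarith
            _ ≤ R^2*‖c‖^2 := by linarith
        have := pow_le_pow_left₀ dist_nonneg h1 2
        linarith
      have hpball : p ∈ Metric.ball e ε := by
        by_contra h
        exact hpD ⟨hpS, h⟩
      refine ⟨p, ⟨hpS, z - p, hpexp⟩, ?_⟩
      simpa [dist_comm] using hpball
  have hclT : closure {p ∈ S | ∃ c : E,
      ∀ y ∈ S, y ≠ p → (inner ℝ c p : ℝ) < inner ℝ c y} ⊆ T :=
    closure_minimal (fun p hp => hExpT p hp.1 hp.2) hTclosed
  have hextT : S.extremePoints ℝ ⊆ T := hstras.trans hclT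
  have hhull : convexHull ℝ (S.extremePoints ℝ) ⊆ T := convexHull_min hextT hTconv
  rw [← closure_convexHull_extremePoints hcomp hconv]
  exact closure_minimal hhull hTclosed

theorem equilibrium_exposed_points (n : ℕ) (S : Set (EuclideanSpace ℝ (Fin n)))
    (hS : S.Nonempty) (hcomp : IsCompact S) (hconv : Convex ℝ S)
    (g : EuclideanSpace ℝ (Fin n) → EuclideanSpace ℝ (Fin n) → ℝ)
    (hqc : ∀ u ∈ S, ∀ v' ∈ S, ∀ v'' ∈ S, ∀ t ∈ Set.Icc (0:ℝ) 1,
      g u ((1 - t) • v' + t • v'') ≤ max (g u v') (g u v''))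
    (hlsc : ∀ u ∈ S, LowerSemicontinuousOn (g u) S) :
    {x0 ∈ S | ∀ x ∈ S, g x0 x ≤ 0} =
      {x0 ∈ S | ∀ x ∈ {x0 ∈ S | ∃ c : EuclideanSpace ℝ (Fin n),
          ∀ y ∈ S, y ≠ x0 → (inner ℝ c x0 : ℝ) < inner ℝ c y}, g x0 x ≤ 0} := by
  ext x0
  simp only [Set.mem_setOf_eq, Set.mem_sep_iff]
  constructor
  · rintro ⟨hx0, h⟩
    exact ⟨hx0, fun x hx => h x hx.1⟩
  rintro ⟨hx0, hE⟩
  refine ⟨hx0, ?_⟩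
  have hTconv : Convex ℝ {x ∈ S | g x0 x ≤ 0} := by
    rintro x ⟨hxS, hxg⟩ y ⟨hyS, hyg⟩ a b ha hb hab
    have hb1 : b ≤ 1 := by linarith
    have hae : a = 1 - b := by linarith
    refine ⟨hconv hxS hyS ha hb hab, ?_⟩
    have h2 := hqc x0 hx0 x hxS y hyS b ⟨hb, hb1⟩
    rw [hae]
    calc g x0 ((1 - b) • x + b • y) ≤ max (g x0 x) (g x0 y) := h2
      _ ≤ 0 := max_le hxg hyg
  have hTclosed : IsClosed {x ∈ S | g x0 x ≤ 0} := by
    rw [← isOpen_compl_iff, isOpen_iff_mem_nhds]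
    intro x hx
    rcases em (x ∈ S) with hxS | hxS
    · have hgx : 0 < g x0 x := by
        by_contra h
        exact hx ⟨hxS, le_of_not_gt h⟩
      have h3 := hlsc x0 hx0 x hxS 0 hgx
      rw [eventually_nhdsWithin_iff] at h3
      filter_upwards [h3] with y hy
      intro ⟨hyS, hyg⟩
      exact absurd (hy hyS) (not_lt.2 hyg)
    · have h4 : Sᶜ ∈ nhds x := hcomp.isClosed.isOpen_compl.mem_nhds hxS
      filter_upwards [h4] with y hy
      intro ⟨hyS, _⟩
      exact hy hyS
  intro x hx
  exact (my_straszewicz hS hcomp hconv hTconv hTclosed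
    (fun p hp hc => ⟨hp, hE p ⟨hp, hc⟩⟩) hx).2
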